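/- Under the random model assumptions, for every n ≥ 1 and every type-B pair partition π_f of [2n], E[Y_{N,π_f}] = α^{NB(π_f)} · q^{Cr(π)+2·Nest(π_f)} · N^{−n} · binom(N,n) · n!; consequently lim_{N→∞} E[Y_{N,π_f}] = α^{NB(π_f)} · q^{Cr(π)+2·Nest(π_f)}. -/

import Mathlib

open Filter MeasureTheory ProbabilityTheory
open scoped BigOperators Classical

/-- The three kinds of labels `1, ∗, ′` for the operators. -/
inductive Eps : Type
  | one
  | star
  | prime
  deriving DecidableEq

/-- A pair partition of `[m]`, encoded as a fixed-point-free involution `p`: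
the blocks are the sets `{x, p x}`. -/
def IsPairing {m : ℕ} (p : Fin m → Fin m) : Prop :=
  ∀ x, p (p x) = x ∧ p x ≠ x

/-- A coloring `f : π → {±1}` of the blocks (encoded pointwise, constant on blocks;
`true` stands for the color `1`, `false` for the color `-1`). -/
def IsColoring {m : ℕ} (p : Fin m → Fin m) (f : Fin m → Bool) : Prop :=
  ∀ x, f (p x) = f x

/-- `ker i = π` for the pair partition encoded by the involution `p`. -/
def kerPair {m : ℕ} (i : Fin m → ℕ) (p : Fin m → Fin m) : Prop :=
  ∀ k l, i k = i l ↔ (k = l ∨ p k = l)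

/-- `NB(π_f)`: the number of blocks colored `-1`. -/
def NBnum {m : ℕ} (p : Fin m → Fin m) (f : Fin m → Bool) : ℕ :=
  (Finset.univ.filter fun a : Fin m => a < p a ∧ f a = false).card

/-- `Cr(π)`: the number of (unordered) crossing pairs of blocks. -/
def CrNum {m : ℕ} (p : Fin m → Fin m) : ℕ :=
  (Finset.univ.filter fun ab : Fin m × Fin m =>
    ab.1 < p ab.1 ∧ ab.2 < p ab.2 ∧ ab.1 < ab.2 ∧ ab.2 < p ab.1 ∧ p ab.1 < p ab.2).card

/-- `Nest(π_f)`: the number of (ordered) pairs of an outer block and a nested block of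
color `-1`. -/
def NestNum {m : ℕ} (p : Fin m → Fin m) (f : Fin m → Bool) : ℕ :=
  (Finset.univ.filter fun ab : Fin m × Fin m =>
    ab.1 < p ab.1 ∧ ab.2 < p ab.2 ∧ ab.1 < ab.2 ∧ p ab.2 < p ab.1 ∧ f ab.2 = false).card

/-- The coefficient `Ξ(π_f, i)`: a product of commutation coefficients over crossing pairs
of blocks and over nesting pairs of blocks.  Here `a, b` run over left legs of blocks. -/
noncomputable def Xi (Q : Eps → Eps → ℕ → ℕ → ℝ) {m : ℕ}
    (p : Fin m → Fin m) (f : Fin m → Bool) (i : Fin m → ℕ) : ℝ :=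
  (∏ a : Fin m, ∏ b : Fin m,
    if a < p a ∧ b < p b ∧ a < b ∧ b < p a ∧ p a < p b then
      Q Eps.star (if f a then Eps.one else Eps.prime) (i b) (i (p a)) else 1) *
  (∏ a : Fin m, ∏ b : Fin m,
    if a < p a ∧ b < p b ∧ a < b ∧ p b < p a then
      Q Eps.star Eps.star (i a) (i b) *
        Q Eps.star (if f b then Eps.one else Eps.prime) (i a) (i (p b)) else 1)

/-- The random model: three mutually independent families of real random variables
`{Q(i,j)}_{i<j}` (i.i.d., compactly supported away from `0`, extended symmetrically),
`{Q̃(i,j)}_{i≠j}` (i.i.d., compactly supported away from `0`) and independent `{Ψ_i}`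
(compactly supported, with summable variances), with prescribed first and second moments
`E[Q(i,j)] = q`, `E[Q(i,j)²] = 1`, `E[Q̃(i,j)] = q` and `E[Ψ_i] = α`. -/
structure RandomModel (Ω : Type*) [MeasureSpace Ω]
    (Q Qt : ℕ → ℕ → Ω → ℝ) (Ψ : ℕ → Ω → ℝ) (q α : ℝ) : Prop where
  prob : IsProbabilityMeasure (ℙ : Measure Ω)
  measQ : ∀ i j, Measurable (Q i j)
  measQt : ∀ i j, Measurable (Qt i j)
  measPsi : ∀ i, Measurable (Ψ i)
  symm : ∀ i j, Q i j = Q j i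
  indep : iIndepFun
    ((fun x : (ℕ × ℕ) ⊕ (ℕ × ℕ) ⊕ ℕ => match x with
      | Sum.inl (i, j) => if i < j then Q i j else fun _ => 0
      | Sum.inr (Sum.inl (i, j)) => if i ≠ j then Qt i j else fun _ => 0
      | Sum.inr (Sum.inr i) => Ψ i) : (ℕ × ℕ) ⊕ (ℕ × ℕ) ⊕ ℕ → Ω → ℝ) ℙ
  idQ : ∀ i j k l, i < j → k < l →
    Measure.map (Q i j) ℙ = Measure.map (Q k l) ℙ
  idQt : ∀ i j k l, i ≠ j → k ≠ l →
    Measure.map (Qt i j) ℙ = Measure.map (Qt k l) ℙ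
  suppQ : ∃ D : Set ℝ, IsCompact D ∧ (∃ ε > 0, ∀ x ∈ D, ε ≤ |x|) ∧
    ∀ i j, i < j → ∀ ω, Q i j ω ∈ D
  suppQt : ∃ D : Set ℝ, IsCompact D ∧ (∃ ε > 0, ∀ x ∈ D, ε ≤ |x|) ∧
    ∀ i j, i ≠ j → ∀ ω, Qt i j ω ∈ D
  suppPsi : ∃ D : Set ℝ, IsCompact D ∧ ∀ i, ∀ ω, Ψ i ω ∈ D
  varSummable : Summable fun i => variance (Ψ i) ℙ
  hq : -1 < q ∧ q < 1
  hα : -1 < α ∧ α < 1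
  momQ : ∀ i j, i < j → ∫ ω, Q i j ω = q
  momQ2 : ∀ i j, i < j → ∫ ω, (Q i j ω) ^ 2 = 1
  momQt : ∀ i j, i ≠ j → ∫ ω, Qt i j ω = q
  momPsi : ∀ i, ∫ ω, Ψ i ω = α

/-- The (random) commutation coefficients of the model:
for `i < j`: `Q_{∗,∗}(i,j) = Q(i,j)`, `Q_{∗,1}(i,j) = Q(i,j)`, `Q_{∗,′}(i,j) = Q̃(i,j)`;
for `i > j`: `Q_{∗,∗}(i,j) = Q(i,j)⁻¹`, `Q_{∗,1}(i,j) = Q(i,j)`,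
`Q_{∗,′}(i,j) = Q(i,j)²Q̃(i,j)`. -/
noncomputable def Qcoef {Ω : Type*} (Q Qt : ℕ → ℕ → Ω → ℝ) (ω : Ω) :
    Eps → Eps → ℕ → ℕ → ℝ
  | Eps.star, Eps.star => fun i j => if i < j then Q i j ω else (Q i j ω)⁻¹
  | Eps.star, Eps.one => fun i j => Q i j ω
  | Eps.star, Eps.prime => fun i j =>
      if i < j then Qt i j ω else (Q i j ω) ^ 2 * Qt i j ω
  | _, _ => fun _ _ => 0

/-- The classical random variable
`Y_{N,π_f} = N^{-n} ∑_{i ∈ [N]^{2n}, ker i = π} Ξ(π_f,i) ∏_{f({z,w})=-1} Ψ_{i(w)}`. -/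
noncomputable def Ymodel {Ω : Type*} (Q Qt : ℕ → ℕ → Ω → ℝ) (Ψ : ℕ → Ω → ℝ)
    {n : ℕ} (N : ℕ) (p : Fin (2 * n) → Fin (2 * n)) (f : Fin (2 * n) → Bool)
    (ω : Ω) : ℝ :=
  ((N : ℝ) ^ n)⁻¹ *
    ∑ i ∈ (Fintype.piFinset fun _ : Fin (2 * n) => Finset.Icc 1 N).filter
        (fun i => kerPair i p),
      Xi (Qcoef Q Qt ω) p f i *
        ∏ a : Fin (2 * n), if a < p a ∧ f a = false then Ψ (i (p a)) ω else 1


lemma myIntegrableBdd {Ω : Type*} [MeasureSpace Ω] [IsFiniteMeasure (ℙ : Measure Ω)]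
    {g : Ω → ℝ} (hm : Measurable g) {C : ℝ} (h : ∀ ω, |g ω| ≤ C) :
    Integrable g := by
  refine (integrable_const C).mono' hm.aestronglyMeasurable (Filter.Eventually.of_forall ?_)
  simpa [Real.norm_eq_abs] using h

lemma integral_prod_indep {Ω : Type*} [MeasureSpace Ω] [IsProbabilityMeasure (ℙ : Measure Ω)]
    {ι : Type*} {F : ι → Ω → ℝ}
    (hindep : iIndepFun F ℙ)
    (hFmeas : ∀ i, Measurable (F i))
    {κ : Type*} (K : Finset κ) (S : κ → Finset ι)
    (hdisj : ∀ k ∈ K, ∀ l ∈ K, k ≠ l → Disjoint (S k) (S l))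
    (G : κ → Ω → ℝ)
    (hG : ∀ k ∈ K, ∃ φ : (↥(S k) → ℝ) → ℝ, Measurable φ ∧
      ∀ ω, G k ω = φ (fun j => F j.1 ω))
    (hbd : ∀ k ∈ K, ∃ C : ℝ, ∀ ω, |G k ω| ≤ C) :
    (Integrable (fun ω => ∏ k ∈ K, G k ω) (ℙ : Measure Ω)) ∧
    ∫ ω, ∏ k ∈ K, G k ω = ∏ k ∈ K, ∫ ω, G k ω := by
  classical
  induction K using Finset.induction with
  | empty => simp
  | @insert k K' hk ih =>
    have hGk := hG k (Finset.mem_insert_self k K')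
    obtain ⟨φ, hφm, hφeq⟩ := hGk
    have hGkm : Measurable (G k) := by
      have : G k = fun ω => φ (fun j => F j.1 ω) := funext hφeq
      rw [this]
      exact hφm.comp (measurable_pi_lambda _ fun j => hFmeas j.1)
    obtain ⟨C, hC⟩ := hbd k (Finset.mem_insert_self k K')
    have hGkint : Integrable (G k) := myIntegrableBdd hGkm hC
    -- measurability and representation of the rest
    have hG' : ∀ l ∈ K', ∃ φ : (↥(S l) → ℝ) → ℝ, Measurable φ ∧
        ∀ ω, G l ω = φ (fun j => F j.1 ω) :=
      fun l hl => hG l (Finset.mem_insert_of_mem hl)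
    choose φ' hφ'm hφ'eq using hG'
    have ihc := ih (fun a ha b hb hab => hdisj a (Finset.mem_insert_of_mem ha)
      b (Finset.mem_insert_of_mem hb) hab)
      (fun l hl => hG l (Finset.mem_insert_of_mem hl))
      (fun l hl => hbd l (Finset.mem_insert_of_mem hl))
    set T : Finset ι := K'.biUnion S with hT
    have hsub : ∀ l (hl : l ∈ K') (j : ↥(S l)), j.1 ∈ T := by
      intro l hl j
      exact Finset.mem_biUnion.mpr ⟨l, hl, j.2⟩
    set ψ : (↥T → ℝ) → ℝ := fun v =>
      ∏ l ∈ K'.attach, φ' l.1 l.2 (fun j => v ⟨j.1, hsub l.1 l.2 j⟩) with hψ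
    have hψm : Measurable ψ := by
      apply Finset.measurable_prod
      intro l _
      exact (hφ'm l.1 l.2).comp (measurable_pi_lambda _ fun j => measurable_pi_apply _)
    have hψeq : ∀ ω, (∏ l ∈ K', G l ω) = ψ (fun j => F j.1 ω) := by
      intro ω
      rw [hψ]
      rw [← Finset.prod_attach K' (fun l => G l ω)]
      exact Finset.prod_congr rfl fun l _ => hφ'eq l.1 l.2 ω
    have hdisjT : Disjoint (S k) T := by
      rw [hT, Finset.disjoint_biUnion_right]
      intro l hl
      exact hdisj k (Finset.mem_insert_self k K') l (Finset.mem_insert_of_mem hl)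
        (by rintro rfl; exact hk hl)
    have hindepkT : IndepFun (G k) (fun ω => ∏ l ∈ K', G l ω) ℙ := by
      have h0 := (hindep.indepFun_finset (S k) T hdisjT hFmeas).comp hφm hψm
      have e1 : G k = φ ∘ (fun ω (j : ↥(S k)) => F j.1 ω) := funext hφeq
      have e2 : (fun ω => ∏ l ∈ K', G l ω) = ψ ∘ (fun ω (j : ↥T) => F j.1 ω) :=
        funext hψeq
      rw [e1, e2]
      exact h0
    have hrestm : Measurable (fun ω => ∏ l ∈ K', G l ω) := by
      have : (fun ω => ∏ l ∈ K', G l ω) = ψ ∘ (fun ω (j : ↥T) => F j.1 ω) := funext hψeq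
      rw [this]
      exact hψm.comp (measurable_pi_lambda _ fun j => hFmeas j.1)
    have hmul := hindepkT.integral_fun_mul_eq_mul_integral hGkint.aestronglyMeasurable ihc.1.aestronglyMeasurable
    constructor
    · have : (fun ω => ∏ l ∈ insert k K', G l ω)
          = fun ω => G k ω * ∏ l ∈ K', G l ω := by
        funext ω; exact Finset.prod_insert hk
      rw [this]
      exact hindepkT.integrable_mul hGkint ihc.1
    · rw [Finset.prod_insert hk]
      calc ∫ ω, ∏ l ∈ insert k K', G l ω = ∫ ω, G k ω * ∏ l ∈ K', G l ω := by
            congr 1; funext ω; exact Finset.prod_insert hk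
        _ = (∫ ω, G k ω) * ∫ ω, ∏ l ∈ K', G l ω := hmul
        _ = _ := by rw [ihc.2]

lemma rep0 {Ω ι : Type*} (F : ι → Ω → ℝ) (c : ℝ) (S : Finset ι) :
    ∃ φ : (↥S → ℝ) → ℝ, Measurable φ ∧ ∀ ω : Ω, c = φ fun j => F j.1 ω :=
  ⟨fun _ => c, measurable_const, fun _ => rfl⟩

lemma rep1 {Ω ι : Type*} (F : ι → Ω → ℝ) (j₀ : ι) (g : Ω → ℝ) (hg : ∀ ω, g ω = F j₀ ω) :
    ∃ φ : (↥({j₀} : Finset ι) → ℝ) → ℝ, Measurable φ ∧ ∀ ω, g ω = φ fun j => F j.1 ω := by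
  refine ⟨fun v => v ⟨j₀, by simp⟩, measurable_pi_apply _, fun ω => by simp [hg]⟩

lemma rep3 {Ω ι : Type*} [DecidableEq ι] (F : ι → Ω → ℝ) (j₀ j₁ j₂ : ι) (ζ : ℝ × ℝ × ℝ → ℝ)
    (hζ : Measurable ζ) (g : Ω → ℝ) (hg : ∀ ω, g ω = ζ (F j₀ ω, F j₁ ω, F j₂ ω)) :
    ∃ φ : (↥({j₀, j₁, j₂} : Finset ι) → ℝ) → ℝ, Measurable φ ∧
      ∀ ω, g ω = φ fun j => F j.1 ω := by
  refine ⟨fun v => ζ (v ⟨j₀, by simp⟩, v ⟨j₁, by simp⟩, v ⟨j₂, by simp⟩),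
    hζ.comp ((measurable_pi_apply _).prodMk
      ((measurable_pi_apply _).prodMk (measurable_pi_apply _))), fun ω => by simp [hg]⟩

lemma leftlegs_card {m n : ℕ} (hm : m = 2 * n) (p : Fin m → Fin m) (hp : IsPairing p) :
    (Finset.univ.filter fun a : Fin m => a < p a).card = n := by
  classical
  have htri : ∀ a : Fin m, ¬ a < p a ↔ p a < a := by
    intro a
    rcases (hp a).2.lt_or_gt with h | h
    · constructor
      · intro _; exact h
      · intro _ hc; exact absurd h (not_lt.mpr hc.le)
    · constructor
      · intro hc; exact absurd h hc
      · intro h2 _; exact absurd h2 (not_lt.mpr h.le)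
  have hcedge : (Finset.univ.filter fun a : Fin m => a < p a).card
      = (Finset.univ.filter fun a : Fin m => ¬ a < p a).card := by
    apply Finset.card_bij (fun a _ => p a)
    · intro a ha
      simp only [Finset.mem_filter, Finset.mem_univ, true_and] at ha ⊢
      rw [htri, (hp a).1]; exact ha
    · intro a ha b hb hab
      have := congrArg p hab
      rwa [(hp a).1, (hp b).1] at this
    · intro b hb
      simp only [Finset.mem_filter, Finset.mem_univ, true_and] at hb
      refine ⟨p b, ?_, (hp b).1⟩
      simp only [Finset.mem_filter, Finset.mem_univ, true_and, (hp b).1]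
      exact (htri b).mp hb
  have hsum := Finset.card_filter_add_card_filter_not
    (s := (Finset.univ : Finset (Fin m))) (p := fun a => a < p a)
  simp only [Finset.card_univ, Fintype.card_fin] at hsum
  omega

lemma ker_count {m n : ℕ} (hm : m = 2 * n) (p : Fin m → Fin m) (hp : IsPairing p) (N : ℕ) :
    ((Fintype.piFinset fun _ : Fin m => Finset.Icc 1 N).filter fun i => kerPair i p).card
      = N.descFactorial n := by
  classical
  set L : Finset (Fin m) := Finset.univ.filter fun a => a < p a with hL
  have hmemL : ∀ a : Fin m, a ∈ L ↔ a < p a := by intro a; simp [hL]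
  have hLcard : L.card = n := leftlegs_card hm p hp
  have pinj : Function.Injective p := by
    intro a b hab
    have := congrArg p hab
    rwa [(hp a).1, (hp b).1] at this
  have hnotleg : ∀ a : Fin m, ¬ a < p a → p a < a := by
    intro a h
    rcases (hp a).2.lt_or_gt with h1 | h1
    · exact h1
    · exact absurd h1 h
  have hinj : ∀ a b : Fin m, a < p a → b < p b → ∀ (i : Fin m → ℕ), kerPair i p →
      i a = i b → a = b := by
    intro a b ha hb i hker h
    rcases (hker a b).mp h with h1 | h1
    · exact h1
    · exfalso
      have hpb : p b = a := by rw [← h1, (hp a).1]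
      have h2 : b < a := hpb ▸ hb
      have h3 : a < b := h1 ▸ ha
      exact absurd h3 (not_lt.mpr h2.le)
  set T : Finset (↥L → ℕ) :=
    (Fintype.piFinset fun _ : ↥L => Finset.Icc 1 N).filter fun j => Function.Injective j with hT
  have hcard2 : T.card = N.descFactorial n := by
    have e : ↥T ≃ (↥L ↪ ↥(Finset.Icc 1 N)) := by
      refine ⟨fun jt => ⟨fun a => ⟨jt.1 a, ?_⟩, fun a b hab => ?_⟩,
        fun e => ⟨fun a => (e a).1, ?_⟩, fun jt => ?_, fun e => ?_⟩
      · have := jt.2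
        simp only [hT, Finset.mem_filter, Fintype.mem_piFinset] at this
        exact this.1 a
      · have := jt.2
        simp only [hT, Finset.mem_filter, Fintype.mem_piFinset] at this
        exact this.2 (congrArg Subtype.val hab)
      · simp only [hT, Finset.mem_filter, Fintype.mem_piFinset]
        exact ⟨fun a => (e a).2, fun a b hab => e.injective (Subtype.ext hab)⟩
      · exact Subtype.ext rfl
      · ext a; rfl
    have h1 : T.card = Fintype.card ↥T := (Fintype.card_coe T).symm
    rw [h1, Fintype.card_congr e, Fintype.card_embedding_eq, Fintype.card_coe,
      Fintype.card_coe, Nat.card_Icc, hLcard]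
    simp
  rw [← hcard2]
  refine Finset.card_bij' (fun i _ => fun a : ↥L => i a.1)
    (fun j _ => fun a : Fin m => if h : a < p a then j ⟨a, (hmemL a).mpr h⟩
      else j ⟨p a, (hmemL (p a)).mpr (by rw [(hp a).1]; exact hnotleg a h)⟩)
    ?_ ?_ ?_ ?_
  · intro i hi
    simp only [Finset.mem_filter] at hi
    simp only [hT, Finset.mem_filter, Fintype.mem_piFinset]
    constructor
    · intro a; exact (Fintype.mem_piFinset.mp hi.1) a.1
    · intro a b hab
      exact Subtype.ext (hinj a.1 b.1 ((hmemL a.1).mp a.2) ((hmemL b.1).mp b.2) i hi.2 hab)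
  · intro j hj
    simp only [hT, Finset.mem_filter, Fintype.mem_piFinset] at hj
    simp only [Finset.mem_filter, Fintype.mem_piFinset]
    have hjinj : ∀ u v : ↥L, j u = j v ↔ u = v := fun u v => hj.2.eq_iff
    constructor
    · intro a
      by_cases h : a < p a
      · rw [dif_pos h]; exact hj.1 _
      · rw [dif_neg h]; exact hj.1 _
    · intro k l
      beta_reduce
      by_cases hk : k < p k <;> by_cases hl : l < p l
      · rw [dif_pos hk, dif_pos hl, hjinj, Subtype.mk.injEq]
        constructor
        · exact Or.inl
        · rintro (h | h)
          · exact h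
          · exfalso
            have h2 : p l = k := by rw [← h, (hp k).1]
            exact absurd (lt_trans (h2 ▸ hl) (h ▸ hk)) (lt_irrefl l)
      · rw [dif_pos hk, dif_neg hl, hjinj, Subtype.mk.injEq]
        constructor
        · intro h
          right; rw [h, (hp l).1]
        · rintro (h | h)
          · exact absurd (h ▸ hk) hl
          · rw [← h, (hp k).1]
      · rw [dif_neg hk, dif_pos hl, hjinj, Subtype.mk.injEq]
        constructor
        · exact fun h => Or.inr h
        · rintro (h | h)
          · exact absurd (h ▸ hl) hk
          · exact h
      · rw [dif_neg hk, dif_neg hl, hjinj, Subtype.mk.injEq]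
        constructor
        · intro h; exact Or.inl (pinj h)
        · rintro (h | h)
          · rw [h]
          · exfalso
            have h2 : p l = k := by rw [← h, (hp k).1]
            have hlk : l < k := h ▸ hnotleg k hk
            have hkl : k < l := h2 ▸ hnotleg l hl
            exact absurd hkl (not_lt.mpr hlk.le)
  · intro i hi
    simp only [Finset.mem_filter] at hi
    funext a
    simp only []
    by_cases h : a < p a
    · rw [dif_pos h]
    · rw [dif_neg h]
      exact (hi.2 (p a) a).mpr (Or.inr (hp a).1)
  · intro j hj
    funext a
    rcases a with ⟨a, ha⟩
    simp [(hmemL a).mp ha]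


lemma tendsto_ratio (n : ℕ) :
    Tendsto (fun N : ℕ => ((N : ℝ) ^ n)⁻¹ * (N.descFactorial n : ℝ)) atTop (nhds 1) := by
  have hlim : Tendsto (fun N : ℕ => ∏ j ∈ Finset.range n, (1 - (j : ℝ) / (N : ℝ)))
      atTop (nhds (∏ _j ∈ Finset.range n, (1 : ℝ))) := by
    apply tendsto_finset_prod
    intro j _
    have h1 : Tendsto (fun N : ℕ => (j : ℝ) / (N : ℝ)) atTop (nhds 0) :=
      tendsto_const_div_atTop_nhds_zero_nat (j : ℝ)
    simpa using (tendsto_const_nhds (x := (1:ℝ)) (f := atTop)).sub h1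
  rw [Finset.prod_const_one] at hlim
  apply hlim.congr'
  filter_upwards [eventually_ge_atTop (max n 1)] with N hN
  have hN1 : 1 ≤ N := le_trans (le_max_right n 1) hN
  have hNn : n ≤ N := le_trans (le_max_left n 1) hN
  have hN0 : (N : ℝ) ≠ 0 := Nat.cast_ne_zero.mpr (by omega)
  have hdesc : (N.descFactorial n : ℝ) = ∏ j ∈ Finset.range n, ((N : ℝ) - j) := by
    rw [Nat.descFactorial_eq_prod_range, Nat.cast_prod]
    refine Finset.prod_congr rfl fun j hj => ?_
    rw [Nat.cast_sub (le_trans (le_of_lt (Finset.mem_range.mp hj)) hNn)]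
  have h2 : ∀ j ∈ Finset.range n, (1 : ℝ) - (j : ℝ) / N = ((N : ℝ) - j) / N := by
    intro j _
    rw [sub_div, div_self hN0]
  rw [Finset.prod_congr rfl h2, Finset.prod_div_distrib, Finset.prod_const,
    Finset.card_range, hdesc, div_eq_inv_mul]

lemma indep_integral_mul {Ω : Type*} [MeasureSpace Ω] {X Y : Ω → ℝ}
    (h : IndepFun X Y (ℙ : Measure Ω)) (hX : Integrable X (ℙ : Measure Ω))
    (hY : Integrable Y (ℙ : Measure Ω)) :
    ∫ ω, X ω * Y ω = (∫ ω, X ω) * ∫ ω, Y ω := h.integral_fun_mul_eq_mul_integral hX.aestronglyMeasurable hY.aestronglyMeasurable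

set_option maxHeartbeats 1000000 in
lemma per_tuple {Ω : Type*} [MeasureSpace Ω]
    (Q Qt : ℕ → ℕ → Ω → ℝ) (Ψ : ℕ → Ω → ℝ) (q α : ℝ)
    (hmodel : RandomModel Ω Q Qt Ψ q α)
    {m : ℕ} (p : Fin m → Fin m) (f : Fin m → Bool)
    (hp : IsPairing p) (i : Fin m → ℕ) (hker : kerPair i p) :
    Integrable (fun ω => Xi (Qcoef Q Qt ω) p f i *
        ∏ a : Fin m, if a < p a ∧ f a = false then Ψ (i (p a)) ω else 1) (ℙ : Measure Ω) ∧
    ∫ ω, (Xi (Qcoef Q Qt ω) p f i *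
        ∏ a : Fin m, if a < p a ∧ f a = false then Ψ (i (p a)) ω else 1)
      = α ^ NBnum p f * q ^ (CrNum p + 2 * NestNum p f) := by
  classical
  haveI : IsProbabilityMeasure (ℙ : Measure Ω) := hmodel.prob
  -- the base family
  set F : ((ℕ × ℕ) ⊕ (ℕ × ℕ) ⊕ ℕ) → Ω → ℝ := fun x => match x with
    | Sum.inl (i, j) => if i < j then Q i j else fun _ => 0
    | Sum.inr (Sum.inl (i, j)) => if i ≠ j then Qt i j else fun _ => 0
    | Sum.inr (Sum.inr i) => Ψ i with hF
  have hindep : iIndepFun F ℙ := hmodel.indep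
  have hFmeas : ∀ x, Measurable (F x) := by
    rintro (⟨a, b⟩ | ⟨a, b⟩ | a)
    · simp only [hF]; split_ifs; exacts [hmodel.measQ a b, measurable_const]
    · simp only [hF]; split_ifs; exacts [hmodel.measQt a b, measurable_const]
    · exact hmodel.measPsi a
  have hFQ : ∀ x y : ℕ, x ≠ y → F (Sum.inl (min x y, max x y)) = Q x y := by
    intro x y hxy
    have hmm : min x y < max x y := min_lt_max.mpr hxy
    show (if min x y < max x y then Q (min x y) (max x y) else fun _ => 0) = Q x y
    rw [if_pos hmm]
    rcases hxy.lt_or_gt with h | h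
    · rw [min_eq_left h.le, max_eq_right h.le]
    · rw [min_eq_right h.le, max_eq_left h.le, hmodel.symm]
  have hFQt : ∀ x y : ℕ, x ≠ y → F (Sum.inr (Sum.inl (x, y))) = Qt x y := by
    intro x y hxy
    show (if x ≠ y then Qt x y else fun _ => 0) = Qt x y
    rw [if_pos hxy]
  -- moments
  have hIQ : ∀ x y : ℕ, x ≠ y → ∫ ω, Q x y ω = q := by
    intro x y hxy
    rcases hxy.lt_or_gt with h | h
    · exact hmodel.momQ x y h
    · rw [hmodel.symm]; exact hmodel.momQ y x h
  have hIQ2 : ∀ x y : ℕ, x ≠ y → ∫ ω, (Q x y ω) ^ 2 = 1 := by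
    intro x y hxy
    rcases hxy.lt_or_gt with h | h
    · exact hmodel.momQ2 x y h
    · rw [hmodel.symm]; exact hmodel.momQ2 y x h
  have hIQt : ∀ x y : ℕ, x ≠ y → ∫ ω, Qt x y ω = q := fun x y hxy => hmodel.momQt x y hxy
  have hIPsi : ∀ x : ℕ, ∫ ω, Ψ x ω = α := hmodel.momPsi
  -- bounds
  obtain ⟨D1, hD1c, ⟨ε1, hε1, hεD1⟩, hD1mem⟩ := hmodel.suppQ
  obtain ⟨D2, hD2c, ⟨ε2, hε2, hεD2⟩, hD2mem⟩ := hmodel.suppQt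
  obtain ⟨D3, hD3c, hD3mem⟩ := hmodel.suppPsi
  obtain ⟨CQ0, hCQ0⟩ := hD1c.isBounded.exists_norm_le
  obtain ⟨CT0, hCT0⟩ := hD2c.isBounded.exists_norm_le
  obtain ⟨CP0, hCP0⟩ := hD3c.isBounded.exists_norm_le
  set CQ : ℝ := max CQ0 0 with hCQdef
  set CT : ℝ := max CT0 0 with hCTdef
  set CP : ℝ := max CP0 0 with hCPdef
  have hCQnn : 0 ≤ CQ := le_max_right _ _
  have hCTnn : 0 ≤ CT := le_max_right _ _
  have hCPnn : 0 ≤ CP := le_max_right _ _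
  have hQmem : ∀ x y : ℕ, x ≠ y → ∀ ω, Q x y ω ∈ D1 := by
    intro x y hxy ω
    rcases hxy.lt_or_gt with h | h
    · exact hD1mem x y h ω
    · rw [hmodel.symm]; exact hD1mem y x h ω
  have hQbd : ∀ x y : ℕ, x ≠ y → ∀ ω, |Q x y ω| ≤ CQ := fun x y hxy ω =>
    le_trans (by simpa [Real.norm_eq_abs] using hCQ0 _ (hQmem x y hxy ω)) (le_max_left _ _)
  have hQtbd : ∀ x y : ℕ, x ≠ y → ∀ ω, |Qt x y ω| ≤ CT := fun x y hxy ω =>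
    le_trans (by simpa [Real.norm_eq_abs] using hCT0 _ (hD2mem x y hxy ω)) (le_max_left _ _)
  have hPbd : ∀ x : ℕ, ∀ ω, |Ψ x ω| ≤ CP := fun x ω =>
    le_trans (by simpa [Real.norm_eq_abs] using hCP0 _ (hD3mem x ω)) (le_max_left _ _)
  have hQeps : ∀ x y : ℕ, x ≠ y → ∀ ω, ε1 ≤ |Q x y ω| := fun x y hxy ω =>
    hεD1 _ (hQmem x y hxy ω)
  have hQne : ∀ x y : ℕ, x ≠ y → ∀ ω, Q x y ω ≠ 0 := by
    intro x y hxy ω h0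
    have := hQeps x y hxy ω
    rw [h0, abs_zero] at this
    linarith
  have hQinvbd : ∀ x y : ℕ, x ≠ y → ∀ ω, |(Q x y ω)⁻¹| ≤ ε1⁻¹ := by
    intro x y hxy ω
    rw [abs_inv]
    exact inv_anti₀ hε1 (hQeps x y hxy ω)
  -- integrability of basic pieces
  have hQint : ∀ x y : ℕ, x ≠ y → Integrable (Q x y) (ℙ : Measure Ω) :=
    fun x y hxy => myIntegrableBdd (hmodel.measQ x y) (hQbd x y hxy)
  have hQ2int : ∀ x y : ℕ, x ≠ y → Integrable (fun ω => (Q x y ω) ^ 2) (ℙ : Measure Ω) :=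
    fun x y hxy => myIntegrableBdd ((hmodel.measQ x y).pow_const 2)
      (fun ω => by rw [abs_pow]; exact pow_le_pow_left₀ (abs_nonneg _) (hQbd x y hxy ω) 2)
  have hQtint : ∀ x y : ℕ, x ≠ y → Integrable (Qt x y) (ℙ : Measure Ω) :=
    fun x y hxy => myIntegrableBdd (hmodel.measQt x y) (hQtbd x y hxy)
  -- independence of Q and Qt entries
  have hQQt : ∀ x y u v : ℕ, x ≠ y → u ≠ v → IndepFun (Q x y) (Qt u v) (ℙ : Measure Ω) := by
    intro x y u v hxy huv
    have h := hindep.indepFun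
      (i := Sum.inl (min x y, max x y)) (j := Sum.inr (Sum.inl (u, v))) (by simp)
    rwa [hFQ x y hxy, hFQt u v huv] at h
  have hIQQt : ∀ x y u v : ℕ, x ≠ y → u ≠ v →
      ∫ ω, Q x y ω * Qt u v ω = q * q := by
    intro x y u v hxy huv
    rw [indep_integral_mul (hQQt x y u v hxy huv) (hQint x y hxy) (hQtint u v huv),
      hIQ x y hxy, hIQt u v huv]
  have hIQ2Qt : ∀ x y u v : ℕ, x ≠ y → u ≠ v →
      ∫ ω, (Q x y ω) ^ 2 * Qt u v ω = q := by
    intro x y u v hxy huv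
    have hind : IndepFun (fun ω => (Q x y ω) ^ 2) (Qt u v) (ℙ : Measure Ω) := by
      have := (hQQt x y u v hxy huv).comp (φ := fun r : ℝ => r ^ 2) (ψ := id)
        (measurable_id.pow_const 2) measurable_id
      exact this
    rw [indep_integral_mul hind (hQ2int x y hxy) (hQtint u v huv),
      hIQ2 x y hxy, hIQt u v huv, one_mul]
  -- facts about i
  have hipa : ∀ a, i (p a) = i a := fun a => (hker (p a) a).mpr (Or.inr (hp a).1)
  have hinjL : ∀ a b : Fin m, a < p a → b < p b → i a = i b → a = b := by
    intro a b ha hb h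
    rcases (hker a b).mp h with h1 | h1
    · exact h1
    · exfalso
      have hpb : p b = a := by rw [← h1, (hp a).1]
      have h2 : b < a := hpb ▸ hb
      have h3 : a < b := h1 ▸ ha
      exact absurd h3 (not_lt.mpr h2.le)
  have hne : ∀ a b : Fin m, a < p a → b < p b → a ≠ b → i a ≠ i b :=
    fun a b ha hb hab h => hab (hinjL a b ha hb h)
  -- the factors
  set G : ((Fin m × Fin m) ⊕ Fin m) → Ω → ℝ := Sum.elim
    (fun z ω =>
      (if z.1 < p z.1 ∧ z.2 < p z.2 ∧ z.1 < z.2 ∧ z.2 < p z.1 ∧ p z.1 < p z.2 then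
        Qcoef Q Qt ω Eps.star (if f z.1 then Eps.one else Eps.prime) (i z.2) (i (p z.1)) else 1) *
      (if z.1 < p z.1 ∧ z.2 < p z.2 ∧ z.1 < z.2 ∧ p z.2 < p z.1 then
        Qcoef Q Qt ω Eps.star Eps.star (i z.1) (i z.2) *
          Qcoef Q Qt ω Eps.star (if f z.2 then Eps.one else Eps.prime) (i z.1) (i (p z.2)) else 1))
    (fun a ω => if a < p a ∧ f a = false then Ψ (i (p a)) ω else 1) with hG
  have hprodeq : ∀ ω, Xi (Qcoef Q Qt ω) p f i *
      (∏ a : Fin m, if a < p a ∧ f a = false then Ψ (i (p a)) ω else 1)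
      = ∏ k : (Fin m × Fin m) ⊕ Fin m, G k ω := by
    intro ω
    rw [Fintype.prod_sum_type]
    simp only [hG, Sum.elim_inl, Sum.elim_inr]
    rw [Finset.prod_mul_distrib, Fintype.prod_prod_type, Fintype.prod_prod_type]
    rfl
  -- the index sets
  set S : ((Fin m × Fin m) ⊕ Fin m) → Finset ((ℕ × ℕ) ⊕ (ℕ × ℕ) ⊕ ℕ) := Sum.elim
    (fun z =>
      if (z.1 < p z.1 ∧ z.2 < p z.2 ∧ z.1 < z.2 ∧ z.2 < p z.1 ∧ p z.1 < p z.2) ∨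
         (z.1 < p z.1 ∧ z.2 < p z.2 ∧ z.1 < z.2 ∧ p z.2 < p z.1) then
        {Sum.inl (min (i z.1) (i z.2), max (i z.1) (i z.2)),
         Sum.inr (Sum.inl (i z.1, i z.2)), Sum.inr (Sum.inl (i z.2, i z.1))} else ∅)
    (fun a => if a < p a ∧ f a = false then {Sum.inr (Sum.inr (i (p a)))} else ∅) with hS
  have hdisj : ∀ k ∈ (Finset.univ : Finset ((Fin m × Fin m) ⊕ Fin m)),
      ∀ l ∈ (Finset.univ : Finset ((Fin m × Fin m) ⊕ Fin m)), k ≠ l →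
      Disjoint (S k) (S l) := by
    rintro k - l - hkl
    rcases k with z | a <;> rcases l with w | b
    · -- inl, inl
      by_cases h1 : (z.1 < p z.1 ∧ z.2 < p z.2 ∧ z.1 < z.2 ∧ z.2 < p z.1 ∧ p z.1 < p z.2) ∨
          (z.1 < p z.1 ∧ z.2 < p z.2 ∧ z.1 < z.2 ∧ p z.2 < p z.1)
      swap
      · simp [hS, h1]
      by_cases h2 : (w.1 < p w.1 ∧ w.2 < p w.2 ∧ w.1 < w.2 ∧ w.2 < p w.1 ∧ p w.1 < p w.2) ∨
          (w.1 < p w.1 ∧ w.2 < p w.2 ∧ w.1 < w.2 ∧ p w.2 < p w.1)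
      swap
      · simp [hS, h2]
      have hz : z.1 < p z.1 ∧ z.2 < p z.2 ∧ z.1 < z.2 := by
        rcases h1 with ⟨u1, u2, u3, _⟩ | ⟨u1, u2, u3, _⟩ <;> exact ⟨u1, u2, u3⟩
      have hw : w.1 < p w.1 ∧ w.2 < p w.2 ∧ w.1 < w.2 := by
        rcases h2 with ⟨u1, u2, u3, _⟩ | ⟨u1, u2, u3, _⟩ <;> exact ⟨u1, u2, u3⟩
      have hzz : i z.1 ≠ i z.2 := hne _ _ hz.1 hz.2.1 (ne_of_lt hz.2.2)
      have hww : i w.1 ≠ i w.2 := hne _ _ hw.1 hw.2.1 (ne_of_lt hw.2.2)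
      have hcase1 : ¬ (i z.1 = i w.1 ∧ i z.2 = i w.2) := by
        rintro ⟨e1, e2⟩
        have e1' : z.1 = w.1 := hinjL _ _ hz.1 hw.1 e1
        have e2' : z.2 = w.2 := hinjL _ _ hz.2.1 hw.2.1 e2
        exact hkl (congrArg Sum.inl (Prod.ext e1' e2'))
      have hcase2 : ¬ (i z.1 = i w.2 ∧ i z.2 = i w.1) := by
        rintro ⟨e1, e2⟩
        have ea : z.1 = w.2 := hinjL _ _ hz.1 hw.2.1 e1
        have eb : z.2 = w.1 := hinjL _ _ hz.2.1 hw.1 e2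
        have : z.1 < z.1 := by
          calc z.1 < z.2 := hz.2.2
            _ = w.1 := eb
            _ < w.2 := hw.2.2
            _ = z.1 := ea.symm
        exact absurd this (lt_irrefl _)
      rw [Finset.disjoint_left]
      intro u hu hv
      simp only [hS, Sum.elim_inl, if_pos h1, if_pos h2, Finset.mem_insert,
        Finset.mem_singleton] at hu hv
      rcases hu with h | h | h <;> rcases hv with g | g | g <;> rw [h] at g <;>
        simp only [Sum.inl.injEq, Sum.inr.injEq, Prod.mk.injEq, reduceCtorEq] at g <;>
        omega
    · -- inl, inr
      by_cases h1 : (z.1 < p z.1 ∧ z.2 < p z.2 ∧ z.1 < z.2 ∧ z.2 < p z.1 ∧ p z.1 < p z.2) ∨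
          (z.1 < p z.1 ∧ z.2 < p z.2 ∧ z.1 < z.2 ∧ p z.2 < p z.1)
      swap
      · simp [hS, h1]
      by_cases h2 : b < p b ∧ f b = false
      swap
      · simp [hS, h2]
      rw [Finset.disjoint_left]
      intro u hu hv
      simp only [hS, Sum.elim_inl, Sum.elim_inr, if_pos h1, if_pos h2, Finset.mem_insert,
        Finset.mem_singleton] at hu hv
      rcases hu with h | h | h <;> rw [h] at hv <;> simp at hv
    · -- inr, inl
      by_cases h1 : (w.1 < p w.1 ∧ w.2 < p w.2 ∧ w.1 < w.2 ∧ w.2 < p w.1 ∧ p w.1 < p w.2) ∨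
          (w.1 < p w.1 ∧ w.2 < p w.2 ∧ w.1 < w.2 ∧ p w.2 < p w.1)
      swap
      · simp [hS, h1]
      by_cases h2 : a < p a ∧ f a = false
      swap
      · simp [hS, h2]
      rw [Finset.disjoint_left]
      intro u hu hv
      simp only [hS, Sum.elim_inl, Sum.elim_inr, if_pos h1, if_pos h2, Finset.mem_insert,
        Finset.mem_singleton] at hu hv
      rcases hv with h | h | h <;> rw [hu] at h <;> simp at h
    · -- inr, inr
      have hab : a ≠ b := fun h => hkl (by rw [h])
      rw [Finset.disjoint_left]
      intro u hu hv
      simp only [hS, Sum.elim_inr] at hu hv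
      split_ifs at hu hv with ha hb
      all_goals try exact absurd hu (Finset.notMem_empty u)
      all_goals try exact absurd hv (Finset.notMem_empty u)
      simp only [Finset.mem_singleton] at hu hv
      rw [hu] at hv
      simp only [Sum.inr.injEq] at hv
      rw [hipa, hipa] at hv
      exact hne a b ha.1 hb.1 hab hv
  have hGrep : ∀ k ∈ (Finset.univ : Finset ((Fin m × Fin m) ⊕ Fin m)),
      ∃ φ : (↥(S k) → ℝ) → ℝ, Measurable φ ∧ ∀ ω, G k ω = φ (fun j => F j.1 ω) := by
    rintro (z | a) -
    · by_cases hc : z.1 < p z.1 ∧ z.2 < p z.2 ∧ z.1 < z.2 ∧ z.2 < p z.1 ∧ p z.1 < p z.2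
      · -- crossing
        have hn : ¬ (z.1 < p z.1 ∧ z.2 < p z.2 ∧ z.1 < z.2 ∧ p z.2 < p z.1) := by
          rintro ⟨-, -, -, h⟩
          exact absurd hc.2.2.2.2 (not_lt.mpr h.le)
        have hxy : i z.1 ≠ i z.2 := hne _ _ hc.1 hc.2.1 (ne_of_lt hc.2.2.1)
        have hSk : S (Sum.inl z) = {Sum.inl (min (i z.1) (i z.2), max (i z.1) (i z.2)),
            Sum.inr (Sum.inl (i z.1, i z.2)), Sum.inr (Sum.inl (i z.2, i z.1))} := by
          simp only [hS, Sum.elim_inl, if_pos (Or.inl hc)]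
        rw [hSk]
        by_cases hfz : f z.1 = true
        · refine rep3 F _ _ _ (fun t => t.1) measurable_fst _ fun ω => ?_
          simp only [hG, Sum.elim_inl, if_pos hc, if_neg hn, hfz, if_true, mul_one,
            Qcoef, hipa, hFQ _ _ hxy]
          rw [hmodel.symm]
        · rcases hxy.lt_or_gt with hlt | hlt
          · -- i z.1 < i z.2, so ¬ (i z.2 < i z.1) : use Q^2 * Qt
            refine rep3 F _ _ _ (fun t => t.1 ^ 2 * t.2.2)
              ((measurable_fst.pow_const 2).mul (measurable_snd.comp measurable_snd)) _
              fun ω => ?_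
            simp only [hG, Sum.elim_inl, if_pos hc, if_neg hn, hfz, if_false, mul_one,
              Qcoef, hipa, hFQ _ _ hxy, hFQt _ _ hxy.symm, if_neg (not_lt.mpr hlt.le),
              Bool.false_eq_true]
            rw [hmodel.symm]
          · refine rep3 F _ _ _ (fun t => t.2.2)
              (measurable_snd.comp measurable_snd) _ fun ω => ?_
            simp only [hG, Sum.elim_inl, if_pos hc, if_neg hn, hfz, if_false, mul_one,
              Qcoef, hipa, hFQt _ _ hxy.symm, if_pos hlt, Bool.false_eq_true]
      · by_cases hn : z.1 < p z.1 ∧ z.2 < p z.2 ∧ z.1 < z.2 ∧ p z.2 < p z.1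
        · -- nesting
          have hxy : i z.1 ≠ i z.2 := hne _ _ hn.1 hn.2.1 (ne_of_lt hn.2.2.1)
          have hSk : S (Sum.inl z) = {Sum.inl (min (i z.1) (i z.2), max (i z.1) (i z.2)),
              Sum.inr (Sum.inl (i z.1, i z.2)), Sum.inr (Sum.inl (i z.2, i z.1))} := by
            simp only [hS, Sum.elim_inl, if_pos (Or.inr hn)]
          rw [hSk]
          have hppz : i (p z.2) = i z.2 := hipa z.2
          by_cases hfz : f z.2 = true <;> rcases hxy.lt_or_gt with hlt | hlt
          · refine rep3 F _ _ _ (fun t => 1 * (t.1 * t.1)) (by fun_prop) _ fun ω => ?_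
            simp only [hG, Sum.elim_inl, if_pos hn, if_neg hc, hfz, if_true, one_mul,
              Qcoef, hppz, hFQ _ _ hxy, if_pos hlt]
          · refine rep3 F _ _ _ (fun t => 1 * (t.1⁻¹ * t.1)) (by fun_prop) _ fun ω => ?_
            simp only [hG, Sum.elim_inl, if_pos hn, if_neg hc, hfz, if_true, one_mul,
              Qcoef, hppz, hFQ _ _ hxy, if_neg (not_lt.mpr hlt.le)]
          · refine rep3 F _ _ _ (fun t => 1 * (t.1 * t.2.1)) (by fun_prop) _ fun ω => ?_
            simp only [hG, Sum.elim_inl, if_pos hn, if_neg hc, hfz, if_false, one_mul,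
              Qcoef, hppz, hFQ _ _ hxy, hFQt _ _ hxy, if_pos hlt, Bool.false_eq_true]
          · refine rep3 F _ _ _ (fun t => 1 * (t.1⁻¹ * (t.1 ^ 2 * t.2.1))) (by fun_prop) _
              fun ω => ?_
            simp only [hG, Sum.elim_inl, if_pos hn, if_neg hc, hfz, if_false, one_mul,
              Qcoef, hppz, hFQ _ _ hxy, hFQt _ _ hxy, if_neg (not_lt.mpr hlt.le),
              Bool.false_eq_true]
        · -- trivial
          refine ⟨fun _ => 1, measurable_const, fun ω => ?_⟩
          simp only [hG, Sum.elim_inl, if_neg hc, if_neg hn, mul_one]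
    · by_cases h : a < p a ∧ f a = false
      · have hSk : S (Sum.inr a) = {Sum.inr (Sum.inr (i (p a)))} := by
          simp only [hS, Sum.elim_inr, if_pos h]
        rw [hSk]
        refine rep1 F _ _ fun ω => ?_
        simp only [hG, Sum.elim_inr, if_pos h]
        rfl
      · refine ⟨fun _ => 1, measurable_const, fun ω => ?_⟩
        simp only [hG, Sum.elim_inr, if_neg h]
  set Cb : ℝ := max (max CQ ε1⁻¹) (max CT (CQ ^ 2 * CT)) with hCb
  have hCbnn : 0 ≤ Cb := le_trans hCQnn (le_trans (le_max_left _ _) (le_max_left _ _))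
  have hQcb : ∀ (e e' : Eps) (x y : ℕ), x ≠ y → ∀ ω, |Qcoef Q Qt ω e e' x y| ≤ Cb := by
    intro e e' x y hxy ω
    cases e <;> cases e' <;> simp only [Qcoef, abs_zero] <;> try exact hCbnn
    · -- star one
      exact le_trans (hQbd x y hxy ω) (le_trans (le_max_left _ _) (le_max_left _ _))
    · -- star star
      split_ifs
      · exact le_trans (hQbd x y hxy ω) (le_trans (le_max_left _ _) (le_max_left _ _))
      · exact le_trans (hQinvbd x y hxy ω) (le_trans (le_max_right _ _) (le_max_left _ _))
    · -- star prime
      split_ifs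
      · exact le_trans (hQtbd x y hxy ω) (le_trans (le_max_left _ _) (le_max_right _ _))
      · refine le_trans ?_ (le_trans (le_max_right _ _) (le_max_right _ _))
        rw [abs_mul, abs_pow]
        exact mul_le_mul (pow_le_pow_left₀ (abs_nonneg _) (hQbd x y hxy ω) 2)
          (hQtbd x y hxy ω) (abs_nonneg _) (by positivity)
  have hbd : ∀ k ∈ (Finset.univ : Finset ((Fin m × Fin m) ⊕ Fin m)),
      ∃ C : ℝ, ∀ ω, |G k ω| ≤ C := by
    rintro (z | a) -
    · refine ⟨max Cb 1 * max (Cb * Cb) 1, fun ω => ?_⟩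
      simp only [hG, Sum.elim_inl]
      rw [abs_mul]
      have hb1 : |if z.1 < p z.1 ∧ z.2 < p z.2 ∧ z.1 < z.2 ∧ z.2 < p z.1 ∧ p z.1 < p z.2 then
          Qcoef Q Qt ω Eps.star (if f z.1 then Eps.one else Eps.prime) (i z.2) (i (p z.1))
          else 1| ≤ max Cb 1 := by
        by_cases h : z.1 < p z.1 ∧ z.2 < p z.2 ∧ z.1 < z.2 ∧ z.2 < p z.1 ∧ p z.1 < p z.2
        · have hxy : i z.2 ≠ i z.1 := (hne _ _ h.1 h.2.1 (ne_of_lt h.2.2.1)).symm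
          rw [if_pos h, hipa]
          exact le_trans (hQcb _ _ _ _ hxy ω) (le_max_left _ _)
        · rw [if_neg h, abs_one]
          exact le_max_right _ _
      have hb2 : |if z.1 < p z.1 ∧ z.2 < p z.2 ∧ z.1 < z.2 ∧ p z.2 < p z.1 then
          Qcoef Q Qt ω Eps.star Eps.star (i z.1) (i z.2) *
            Qcoef Q Qt ω Eps.star (if f z.2 then Eps.one else Eps.prime) (i z.1) (i (p z.2))
          else 1| ≤ max (Cb * Cb) 1 := by
        by_cases h : z.1 < p z.1 ∧ z.2 < p z.2 ∧ z.1 < z.2 ∧ p z.2 < p z.1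
        · have hxy : i z.1 ≠ i z.2 := hne _ _ h.1 h.2.1 (ne_of_lt h.2.2.1)
          rw [if_pos h, hipa, abs_mul]
          exact le_trans (mul_le_mul (hQcb _ _ _ _ hxy ω) (hQcb _ _ _ _ hxy ω)
            (abs_nonneg _) hCbnn) (le_max_left _ _)
        · rw [if_neg h, abs_one]
          exact le_max_right _ _
      exact mul_le_mul hb1 hb2 (abs_nonneg _) (le_trans hCbnn (le_max_left _ _))
    · refine ⟨max CP 1, fun ω => ?_⟩
      simp only [hG, Sum.elim_inr]
      split_ifs
      · exact le_trans (hPbd _ ω) (le_max_left _ _)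
      · rw [abs_one]
        exact le_max_right _ _
  have hA := integral_prod_indep hindep hFmeas Finset.univ S hdisj G hGrep hbd
  have hfeq : (fun ω => Xi (Qcoef Q Qt ω) p f i *
      ∏ a : Fin m, if a < p a ∧ f a = false then Ψ (i (p a)) ω else 1)
      = fun ω => ∏ k : (Fin m × Fin m) ⊕ Fin m, G k ω := funext hprodeq
  -- values of the individual integrals
  have hvalr : ∀ a : Fin m, (∫ ω, G (Sum.inr a) ω)
      = if a < p a ∧ f a = false then α else 1 := by
    intro a
    by_cases h : a < p a ∧ f a = false
    · simp only [hG, Sum.elim_inr, if_pos h]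
      exact hIPsi _
    · simp only [hG, Sum.elim_inr, if_neg h]
      simp
  have hvall : ∀ z : Fin m × Fin m, (∫ ω, G (Sum.inl z) ω)
      = (if z.1 < p z.1 ∧ z.2 < p z.2 ∧ z.1 < z.2 ∧ z.2 < p z.1 ∧ p z.1 < p z.2 then q else 1) *
        (if z.1 < p z.1 ∧ z.2 < p z.2 ∧ z.1 < z.2 ∧ p z.2 < p z.1 ∧ f z.2 = false then q ^ 2
          else 1) := by
    intro z
    by_cases hc : z.1 < p z.1 ∧ z.2 < p z.2 ∧ z.1 < z.2 ∧ z.2 < p z.1 ∧ p z.1 < p z.2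
    · have hn : ¬ (z.1 < p z.1 ∧ z.2 < p z.2 ∧ z.1 < z.2 ∧ p z.2 < p z.1) := by
        rintro ⟨-, -, -, h⟩
        exact absurd hc.2.2.2.2 (not_lt.mpr h.le)
      have hn' : ¬ (z.1 < p z.1 ∧ z.2 < p z.2 ∧ z.1 < z.2 ∧ p z.2 < p z.1 ∧ f z.2 = false) := by
        rintro ⟨-, -, -, h, -⟩
        exact absurd hc.2.2.2.2 (not_lt.mpr h.le)
      have hxy : i z.1 ≠ i z.2 := hne _ _ hc.1 hc.2.1 (ne_of_lt hc.2.2.1)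
      rw [if_pos hc, if_neg hn', mul_one]
      by_cases hfz : f z.1 = true
      · simp only [hG, Sum.elim_inl, if_pos hc, if_neg hn, hfz, if_true, mul_one,
          Qcoef, hipa]
        exact hIQ _ _ hxy.symm
      · rcases hxy.lt_or_gt with hlt | hlt
        · simp only [hG, Sum.elim_inl, if_pos hc, if_neg hn, hfz, if_false, mul_one,
            Qcoef, hipa, if_neg (not_lt.mpr hlt.le), Bool.false_eq_true]
          exact hIQ2Qt _ _ _ _ hxy.symm hxy.symm
        · simp only [hG, Sum.elim_inl, if_pos hc, if_neg hn, hfz, if_false, mul_one,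
            Qcoef, hipa, if_pos hlt, Bool.false_eq_true]
          exact hIQt _ _ hxy.symm
    · rw [if_neg hc, one_mul]
      by_cases hn : z.1 < p z.1 ∧ z.2 < p z.2 ∧ z.1 < z.2 ∧ p z.2 < p z.1
      · have hxy : i z.1 ≠ i z.2 := hne _ _ hn.1 hn.2.1 (ne_of_lt hn.2.2.1)
        have hppz : i (p z.2) = i z.2 := hipa z.2
        by_cases hfz : f z.2 = true <;> rcases hxy.lt_or_gt with hlt | hlt
        · rw [if_neg (by rintro ⟨-, -, -, -, h⟩; rw [hfz] at h; exact absurd h (by simp))]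
          simp only [hG, Sum.elim_inl, if_pos hn, if_neg hc, hfz, if_true, one_mul,
            Qcoef, hppz, if_pos hlt]
          have hsq : ∀ ω, Q (i z.1) (i z.2) ω * Q (i z.1) (i z.2) ω
              = (Q (i z.1) (i z.2) ω) ^ 2 := fun ω => (sq _).symm
          simp only [hsq]
          exact hIQ2 _ _ hxy
        · rw [if_neg (by rintro ⟨-, -, -, -, h⟩; rw [hfz] at h; exact absurd h (by simp))]
          simp only [hG, Sum.elim_inl, if_pos hn, if_neg hc, hfz, if_true, one_mul,
            Qcoef, hppz, if_neg (not_lt.mpr hlt.le)]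
          have hone : ∀ ω, (Q (i z.1) (i z.2) ω)⁻¹ * Q (i z.1) (i z.2) ω = 1 :=
            fun ω => inv_mul_cancel₀ (hQne _ _ hxy ω)
          simp only [hone]
          simp
        · rw [if_pos ⟨hn.1, hn.2.1, hn.2.2.1, hn.2.2.2, by simpa using hfz⟩]
          simp only [hG, Sum.elim_inl, if_pos hn, if_neg hc, hfz, if_false, one_mul,
            Qcoef, hppz, if_pos hlt, Bool.false_eq_true]
          rw [hIQQt _ _ _ _ hxy hxy, sq]
        · rw [if_pos ⟨hn.1, hn.2.1, hn.2.2.1, hn.2.2.2, by simpa using hfz⟩]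
          simp only [hG, Sum.elim_inl, if_pos hn, if_neg hc, hfz, if_false, one_mul,
            Qcoef, hppz, if_neg (not_lt.mpr hlt.le), Bool.false_eq_true]
          have hptw : ∀ ω, (Q (i z.1) (i z.2) ω)⁻¹ *
              ((Q (i z.1) (i z.2) ω) ^ 2 * Qt (i z.1) (i z.2) ω)
              = Q (i z.1) (i z.2) ω * Qt (i z.1) (i z.2) ω := by
            intro ω
            have h0 := hQne _ _ hxy ω
            field_simp
          simp only [hptw]
          rw [hIQQt _ _ _ _ hxy hxy, sq]
      · rw [if_neg (by rintro ⟨h1, h2, h3, h4, -⟩; exact hn ⟨h1, h2, h3, h4⟩)]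
        simp only [hG, Sum.elim_inl, if_neg hc, if_neg hn, mul_one]
        simp
  constructor
  · rw [hfeq]
    exact hA.1
  · rw [show (∫ ω, Xi (Qcoef Q Qt ω) p f i *
        ∏ a : Fin m, if a < p a ∧ f a = false then Ψ (i (p a)) ω else 1)
      = ∫ ω, ∏ k : (Fin m × Fin m) ⊕ Fin m, G k ω from by rw [hfeq]]
    rw [hA.2, Fintype.prod_sum_type]
    have h2 : (∏ a : Fin m, ∫ ω, G (Sum.inr a) ω) = α ^ NBnum p f := by
      rw [Finset.prod_congr rfl fun a _ => hvalr a, ← Finset.prod_filter, Finset.prod_const]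
      rfl
    have h1 : (∏ z : Fin m × Fin m, ∫ ω, G (Sum.inl z) ω)
        = q ^ (CrNum p + 2 * NestNum p f) := by
      rw [Finset.prod_congr rfl fun z _ => hvall z, Finset.prod_mul_distrib,
        ← Finset.prod_filter, ← Finset.prod_filter, Finset.prod_const, Finset.prod_const,
        ← pow_mul, ← pow_add]
      rfl
    rw [h1, h2]
    ring

/-- the exact expectation
`E[Y_{N,π_f}] = α^{NB(π_f)} q^{Cr(π)+2Nest(π_f)} · N^{-n} C(N,n) n!` and its limit
`α^{NB(π_f)} q^{Cr(π)+2Nest(π_f)}` as `N → ∞`. -/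
theorem stmt13 {Ω : Type*} [MeasureSpace Ω]
    (Q Qt : ℕ → ℕ → Ω → ℝ) (Ψ : ℕ → Ω → ℝ) (q α : ℝ)
    (hmodel : RandomModel Ω Q Qt Ψ q α)
    (n : ℕ) (hn : 1 ≤ n) (p : Fin (2 * n) → Fin (2 * n)) (f : Fin (2 * n) → Bool)
    (hp : IsPairing p) (hf : IsColoring p f) :
    (∀ N : ℕ, ∫ ω, Ymodel Q Qt Ψ N p f ω
        = α ^ NBnum p f * q ^ (CrNum p + 2 * NestNum p f) *
            (((N : ℝ) ^ n)⁻¹ * (N.choose n) * (Nat.factorial n))) ∧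
    Tendsto (fun N : ℕ => ∫ ω, Ymodel Q Qt Ψ N p f ω) atTop
      (nhds (α ^ NBnum p f * q ^ (CrNum p + 2 * NestNum p f))) := by
  classical
  haveI : IsProbabilityMeasure (ℙ : Measure Ω) := hmodel.prob
  have hmain : ∀ N : ℕ, ∫ ω, Ymodel Q Qt Ψ N p f ω
      = α ^ NBnum p f * q ^ (CrNum p + 2 * NestNum p f) *
        (((N : ℝ) ^ n)⁻¹ * (N.descFactorial n : ℝ)) := by
    intro N
    have hterm := fun (i : Fin (2 * n) → ℕ) (hker : kerPair i p) =>
      per_tuple Q Qt Ψ q α hmodel p f hp i hker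
    unfold Ymodel
    rw [MeasureTheory.integral_const_mul]
    rw [integral_finset_sum _ (fun i hi => (hterm i (Finset.mem_filter.mp hi).2).1)]
    rw [Finset.sum_congr rfl (fun i hi => (hterm i (Finset.mem_filter.mp hi).2).2)]
    rw [Finset.sum_const, ker_count rfl p hp N, nsmul_eq_mul]
    ring
  constructor
  · intro N
    rw [hmain N, Nat.descFactorial_eq_factorial_mul_choose, Nat.cast_mul]
    ring
  · have heq : (fun N : ℕ => ∫ ω, Ymodel Q Qt Ψ N p f ω)
        = fun N : ℕ => (α ^ NBnum p f * q ^ (CrNum p + 2 * NestNum p f)) *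
            (((N : ℝ) ^ n)⁻¹ * (N.descFactorial n : ℝ)) :=
      funext fun N => by rw [hmain N]
    rw [heq]
    have h := (tendsto_ratio n).const_mul
      (α ^ NBnum p f * q ^ (CrNum p + 2 * NestNum p f))
    simpa using h
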